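/- Matrix exponential formula: for a unit vector n ∈ ℝ³ and real φ, exp(−i(φ/2)·σ_n) = cos(φ/2)·1 − i sin(φ/2)·σ_n, where σ_n = n₁σ_x + n₂σ_y + n₃σ_z. -/

import Mathlib

open Matrix Complex Real

noncomputable section

def σx : Matrix (Fin 2) (Fin 2) ℂ := !![0, 1; 1, 0]
def σy : Matrix (Fin 2) (Fin 2) ℂ := !![0, -Complex.I; Complex.I, 0]
def σz : Matrix (Fin 2) (Fin 2) ℂ := !![1, 0; 0, -1]

def pauliDot (v : Fin 3 → ℝ) : Matrix (Fin 2) (Fin 2) ℂ :=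
  ((v 0 : ℂ)) • σx + ((v 1 : ℂ)) • σy + ((v 2 : ℂ)) • σz

def outer (v w : Fin 2 → ℂ) : Matrix (Fin 2) (Fin 2) ℂ :=
  Matrix.of fun i j => v i * (starRingEnd ℂ) (w j)

lemma pauliDot_sq (n : Fin 3 → ℝ) (hn : n 0 ^ 2 + n 1 ^ 2 + n 2 ^ 2 = 1) :
    pauliDot n * pauliDot n = 1 := by
  have hn' : (n 0 : ℂ) ^ 2 + (n 1 : ℂ) ^ 2 + (n 2 : ℂ) ^ 2 = 1 := by exact_mod_cast hn
  ext i j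
  fin_cases i <;> fin_cases j <;>
    simp [pauliDot, σx, σy, σz, Matrix.mul_apply, Fin.sum_univ_succ, Matrix.one_apply] <;>
    first
      | ring1
      | linear_combination hn' - ((n 1 : ℂ)^2) * Complex.I_sq

/-- The algebra hom `ℂ × ℂ → M₂(ℂ)` attached to an involution `A`. -/
def invHom (A : Matrix (Fin 2) (Fin 2) ℂ) (hA : A * A = 1) :
    ℂ × ℂ →ₐ[ℂ] Matrix (Fin 2) (Fin 2) ℂ where
  toFun p := ((p.1 + p.2) / 2) • 1 + ((p.1 - p.2) / 2) • A
  map_one' := by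
    show (((1:ℂ) + 1) / 2) • (1 : Matrix (Fin 2) (Fin 2) ℂ) + (((1:ℂ) - 1) / 2) • A = 1
    norm_num
  map_mul' p q := by
    simp only [Prod.fst_mul, Prod.snd_mul, add_mul, mul_add, smul_mul_assoc, mul_smul_comm,
      one_mul, mul_one, hA, smul_smul]
    match_scalars <;> ring
  map_zero' := by
    show (((0:ℂ) + 0) / 2) • (1 : Matrix (Fin 2) (Fin 2) ℂ) + (((0:ℂ) - 0) / 2) • A = 0
    norm_num
  map_add' p q := by
    simp only [Prod.fst_add, Prod.snd_add]
    match_scalars <;> ring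
  commutes' c := by
    have h : (algebraMap ℂ (ℂ × ℂ)) c = (c, c) := rfl
    rw [h]
    show ((c + c) / 2) • (1 : Matrix (Fin 2) (Fin 2) ℂ) + ((c - c) / 2) • A
      = algebraMap ℂ _ c
    rw [Algebra.algebraMap_eq_smul_one]
    match_scalars <;> ring

theorem stmt9 (n : Fin 3 → ℝ) (hn : n 0 ^ 2 + n 1 ^ 2 + n 2 ^ 2 = 1) (φ : ℝ) :
    NormedSpace.exp ((-(Complex.I * ((φ : ℂ)/2))) • pauliDot n)
      = ((Real.cos (φ/2) : ℝ) : ℂ) • (1 : Matrix (Fin 2) (Fin 2) ℂ)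
        - (Complex.I * ((Real.sin (φ/2) : ℝ) : ℂ)) • pauliDot n := by
  letI : SeminormedRing (Matrix (Fin 2) (Fin 2) ℂ) := Matrix.linftyOpSemiNormedRing
  letI : NormedRing (Matrix (Fin 2) (Fin 2) ℂ) := Matrix.linftyOpNormedRing
  letI : NormedAlgebra ℂ (Matrix (Fin 2) (Fin 2) ℂ) := Matrix.linftyOpNormedAlgebra
  have hA := pauliDot_sq n hn
  set c : ℂ := -(Complex.I * ((φ : ℂ)/2)) with hc
  set f := invHom (pauliDot n) hA with hf
  have hcont : Continuous f := by
    show Continuous fun p : ℂ × ℂ => ((p.1 + p.2) / 2) • (1 : Matrix (Fin 2) (Fin 2) ℂ)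
      + ((p.1 - p.2) / 2) • pauliDot n
    fun_prop
  have key : f (c, -c) = c • pauliDot n := by
    show ((c + -c) / 2) • (1 : Matrix (Fin 2) (Fin 2) ℂ) + ((c - -c) / 2) • pauliDot n
      = c • pauliDot n
    match_scalars <;> ring
  have hmap := NormedSpace.map_exp f hcont (c, -c)
  rw [key] at hmap
  erw [← hmap]
  have hexp : NormedSpace.exp ((c, -c) : ℂ × ℂ)
      = (Complex.exp c, Complex.exp (-c)) := by
    ext
    · rw [Prod.fst_exp, Complex.exp_eq_exp_ℂ]
    · rw [Prod.snd_exp, Complex.exp_eq_exp_ℂ]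
  rw [hexp]
  show ((Complex.exp c + Complex.exp (-c)) / 2) • (1 : Matrix (Fin 2) (Fin 2) ℂ)
      + ((Complex.exp c - Complex.exp (-c)) / 2) • pauliDot n = _
  have h1 : Complex.exp c = Complex.cos (φ/2) - Complex.sin (φ/2) * Complex.I := by
    rw [hc, show -(Complex.I * ((φ : ℂ)/2)) = (-((φ:ℂ)/2)) * Complex.I by ring,
      Complex.exp_mul_I, Complex.cos_neg, Complex.sin_neg]
    ring
  have h2 : Complex.exp (-c) = Complex.cos (φ/2) + Complex.sin (φ/2) * Complex.I := by
    rw [hc, neg_neg, show Complex.I * ((φ : ℂ)/2) = ((φ:ℂ)/2) * Complex.I by ring,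
      Complex.exp_mul_I]
  rw [h1, h2]
  match_scalars
  · ring
  · ring
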